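/- Let p be an odd prime with p ≡ 1 (mod 4), and a an integer with (a/p) = 1. Then the number of x ∈ Z/pZ with (x/p) = 1 and ((x+a)/p) = 1 equals (p−1)/4 − 1, while the numbers of x with sign patterns (+,−), (−,+), and (−,−) each equal (p−1)/4. -/

import Mathlib

open Finset


private lemma chi_sum_mul' {p : ℕ} [Fact p.Prime] (hp2 : p ≠ 2) (b : ZMod p) (hb : b ≠ 0) :
    ∑ x : ZMod p, quadraticChar (ZMod p) x * quadraticChar (ZMod p) (x + b) = -1 := by
  have hchar : ringChar (ZMod p) ≠ 2 := by
    rw [ZMod.ringChar_zmod_n]; exact hp2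
  set χ := quadraticChar (ZMod p) with hχ
  have h0 : ∑ x : ZMod p, χ x * χ (x + b)
      = ∑ x ∈ univ.erase (0 : ZMod p), χ x * χ (x + b) := by
    exact (Finset.sum_erase _ (by simp [hχ, quadraticChar_zero])).symm
  have h1 : ∑ x ∈ univ.erase (0 : ZMod p), χ x * χ (x + b)
      = ∑ u ∈ univ.erase (1 : ZMod p), χ u := by
    refine Finset.sum_nbij' (fun x => 1 + b * x⁻¹) (fun u => b * (u - 1)⁻¹)
      ?_ ?_ ?_ ?_ ?_
    · intro x hx
      simp only [mem_erase, mem_univ, and_true] at hx ⊢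
      intro h
      have : b * x⁻¹ = 0 := by linear_combination h
      rcases mul_eq_zero.mp this with h' | h'
      · exact hb h'
      · exact hx (inv_eq_zero.mp h')
    · intro u hu
      simp only [mem_erase, mem_univ, and_true] at hu ⊢
      intro h
      rcases mul_eq_zero.mp h with h' | h'
      · exact hb h'
      · exact hu (sub_eq_zero.mp (inv_eq_zero.mp h'))
    · intro x hx
      simp only [mem_erase, mem_univ, and_true] at hx
      field_simp
      simp [hb]
    · intro u hu
      simp only [mem_erase, mem_univ, and_true] at hu
      have h1 : u - 1 ≠ 0 := sub_ne_zero.mpr hu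
      field_simp
      ring
    · intro x hx
      simp only [mem_erase, mem_univ, and_true] at hx
      have : χ x * χ (x + b) = χ (x * (x + b)) := (map_mul χ x (x + b)).symm
      rw [this]
      have hxx : x * (x + b) = x ^ 2 * (1 + b * x⁻¹) := by
        field_simp
      rw [hxx, map_mul χ, quadraticChar_sq_one' hx, one_mul]
  have h2 : ∑ u ∈ univ.erase (1 : ZMod p), χ u = -1 := by
    have h3 := Finset.add_sum_erase univ χ (mem_univ (1 : ZMod p))
    have hz := quadraticChar_sum_zero hchar
    rw [← hχ] at hz
    rw [hz] at h3
    have h4 : χ 1 = 1 := map_one χ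
    omega
  rw [h0, h1, h2]


/-- for p ≡ 1 (mod 4) and (a/p) = 1, the counts of the four
Legendre sign patterns for (x, x + a). -/
theorem legendre_pair_count_one_mod_four (p : ℕ) [Fact p.Prime] (hodd : Odd p)
    (hp4 : p % 4 = 1) (a : ℤ) (ha : legendreSym p a = 1) :
    Nat.card {x : ZMod p // x ≠ 0 ∧ x + (a : ZMod p) ≠ 0 ∧
        legendreSym p (x.val : ℤ) = 1 ∧
        legendreSym p ((x + (a : ZMod p)).val : ℤ) = 1} = (p - 1) / 4 - 1 ∧
    Nat.card {x : ZMod p // x ≠ 0 ∧ x + (a : ZMod p) ≠ 0 ∧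
        legendreSym p (x.val : ℤ) = 1 ∧
        legendreSym p ((x + (a : ZMod p)).val : ℤ) = -1} = (p - 1) / 4 ∧
    Nat.card {x : ZMod p // x ≠ 0 ∧ x + (a : ZMod p) ≠ 0 ∧
        legendreSym p (x.val : ℤ) = -1 ∧
        legendreSym p ((x + (a : ZMod p)).val : ℤ) = 1} = (p - 1) / 4 ∧
    Nat.card {x : ZMod p // x ≠ 0 ∧ x + (a : ZMod p) ≠ 0 ∧
        legendreSym p (x.val : ℤ) = -1 ∧
        legendreSym p ((x + (a : ZMod p)).val : ℤ) = -1} = (p - 1) / 4 := by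
  classical
  have hp2 : p ≠ 2 := by rintro rfl; simp at hp4
  have hple : 2 ≤ p := (Fact.out : p.Prime).two_le
  have hp5 : 5 ≤ p := by omega
  have hchar : ringChar (ZMod p) ≠ 2 := by rw [ZMod.ringChar_zmod_n]; exact hp2
  set χ := quadraticChar (ZMod p) with hχ
  set b : ZMod p := (a : ZMod p) with hbdef
  have hab : χ b = 1 := ha
  have hb0 : b ≠ 0 := by
    intro h
    rw [h, hχ] at hab
    rw [quadraticChar_zero] at hab
    exact absurd hab (by norm_num)
  have hm1 : χ (-1) = 1 := by
    rw [hχ, quadraticChar_neg_one hchar, ZMod.card]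
    have h2 : p % 2 = 1 := by omega
    rw [ZMod.χ₄_nat_eq_if_mod_four]
    simp [h2, hp4]
  have hmb : χ (-b) = 1 := by
    have : (-b) = (-1) * b := by ring
    rw [this, map_mul, hm1, hab, one_mul]
  have hleg : ∀ y : ZMod p, legendreSym p (y.val : ℤ) = χ y := by
    intro y
    have hy : ((y.val : ℤ) : ZMod p) = y := by
      push_cast [ZMod.natCast_val, ZMod.cast_id]
      rfl
    show quadraticChar (ZMod p) ((y.val : ℤ) : ZMod p) = χ y
    rw [hy, hχ]
  set S : Finset (ZMod p) := univ.filter (fun x => x ≠ 0 ∧ x + b ≠ 0) with hSdef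
  have hmemS : ∀ x : ZMod p, x ∈ S ↔ x ≠ 0 ∧ x + b ≠ 0 := by
    intro x; rw [hSdef]; simp
  have hzsum : ∑ x : ZMod p, χ x = 0 := by rw [hχ]; exact quadraticChar_sum_zero hchar
  -- cardinality of S
  have hScard : (S.card : ℤ) = (p : ℤ) - 2 := by
    have hS : S = (univ.erase (-b)).erase 0 := by
      ext x
      rw [hmemS]
      simp only [mem_erase, mem_univ, and_true]
      constructor
      · rintro ⟨h1, h2⟩
        exact ⟨h1, fun h => h2 (by rw [h]; ring)⟩
      · rintro ⟨h1, h2⟩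
        exact ⟨h1, fun h => h2 (by
          have : x = -b := by linear_combination h
          exact this)⟩
    have h0mem : (0 : ZMod p) ∈ univ.erase (-b) :=
      mem_erase.mpr ⟨Ne.symm (neg_ne_zero.mpr hb0), mem_univ _⟩
    rw [hS, card_erase_of_mem h0mem, card_erase_of_mem (mem_univ _), card_univ, ZMod.card]
    omega
  -- sum of χ x over S
  have hA : ∑ x ∈ S, χ x = -1 := by
    have e1 : χ (-b) + ∑ x ∈ univ.erase (-b), χ x = 0 := by
      rw [Finset.add_sum_erase _ _ (mem_univ (-b))]; exact hzsum
    have h0mem : (0 : ZMod p) ∈ univ.erase (-b) :=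
      mem_erase.mpr ⟨Ne.symm (neg_ne_zero.mpr hb0), mem_univ _⟩
    have e2 : χ 0 + ∑ x ∈ (univ.erase (-b)).erase 0, χ x = ∑ x ∈ univ.erase (-b), χ x :=
      Finset.add_sum_erase _ _ h0mem
    have hS : S = (univ.erase (-b)).erase 0 := by
      ext x
      rw [hmemS]
      simp only [mem_erase, mem_univ, and_true]
      constructor
      · rintro ⟨h1, h2⟩
        exact ⟨h1, fun h => h2 (by rw [h]; ring)⟩
      · rintro ⟨h1, h2⟩
        exact ⟨h1, fun h => h2 (by linear_combination h)⟩
    have hz0 : χ 0 = 0 := by rw [hχ]; exact quadraticChar_zero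
    rw [hS]
    rw [hmb] at e1
    rw [hz0] at e2
    omega
  -- sum of χ (x+b) over S
  have hB : ∑ x ∈ S, χ (x + b) = -1 := by
    have e0 : ∑ x ∈ S, χ (x + b) = ∑ y ∈ (univ.erase b).erase 0, χ y := by
      refine Finset.sum_nbij' (fun x => x + b) (fun y => y - b) ?_ ?_ ?_ ?_ ?_
      · intro x hx
        rw [hmemS] at hx
        simp only [mem_erase, mem_univ, and_true]
        exact ⟨hx.2, fun h => hx.1 (by linear_combination h)⟩
      · intro y hy
        simp only [mem_erase, mem_univ, and_true] at hy
        rw [hmemS]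
        constructor
        · intro h; exact hy.2 (by linear_combination h)
        · intro h; exact hy.1 (by linear_combination h)
      · intro x _; ring
      · intro y _; ring
      · intro x _; rfl
    have e1 : χ b + ∑ x ∈ univ.erase b, χ x = 0 := by
      rw [Finset.add_sum_erase _ _ (mem_univ b)]; exact hzsum
    have h0mem : (0 : ZMod p) ∈ univ.erase b :=
      mem_erase.mpr ⟨Ne.symm hb0, mem_univ _⟩
    have e2 : χ 0 + ∑ x ∈ (univ.erase b).erase 0, χ x = ∑ x ∈ univ.erase b, χ x :=
      Finset.add_sum_erase _ _ h0mem
    have hz0 : χ 0 = 0 := by rw [hχ]; exact quadraticChar_zero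
    rw [e0]
    rw [hab] at e1
    rw [hz0] at e2
    omega
  -- sum of χ x * χ (x+b) over S
  have hT : ∑ x ∈ S, χ x * χ (x + b) = -1 := by
    have := chi_sum_mul' hp2 b hb0
    rw [← hχ] at this
    rw [← this]
    refine Finset.sum_subset (Finset.subset_univ S) ?_
    intro x _ hx
    rw [hmemS] at hx
    push_neg at hx
    by_cases h0 : x = 0
    · rw [h0]; simp [hχ, quadraticChar_zero]
    · rw [hx h0]; simp [hχ, quadraticChar_zero]
  -- the key counting identity
  have key : ∀ ε δ : ℤ, (ε = 1 ∨ ε = -1) → (δ = 1 ∨ δ = -1) →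
      4 * ((S.filter (fun x => χ x = ε ∧ χ (x + b) = δ)).card : ℤ)
        = (p : ℤ) - 2 - ε - δ - ε * δ := by
    intro ε δ hε hδ
    have expand : ∑ x ∈ S, (1 + ε * χ x) * (1 + δ * χ (x + b))
        = (S.card : ℤ) + ε * (∑ x ∈ S, χ x) + δ * (∑ x ∈ S, χ (x + b))
          + (ε * δ) * ∑ x ∈ S, χ x * χ (x + b) := by
      have hterm : ∀ x ∈ S, (1 + ε * χ x) * (1 + δ * χ (x + b))
          = 1 + ε * χ x + δ * χ (x + b) + (ε * δ) * (χ x * χ (x + b)) := by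
        intro x _; ring
      rw [Finset.sum_congr rfl hterm]
      rw [Finset.sum_add_distrib, Finset.sum_add_distrib, Finset.sum_add_distrib,
        Finset.sum_const, ← Finset.mul_sum, ← Finset.mul_sum, ← Finset.mul_sum]
      simp [nsmul_eq_mul]
    have eval : ∑ x ∈ S, (1 + ε * χ x) * (1 + δ * χ (x + b))
        = 4 * ((S.filter (fun x => χ x = ε ∧ χ (x + b) = δ)).card : ℤ) := by
      rw [← Finset.sum_filter_add_sum_filter_not S (fun x => χ x = ε ∧ χ (x + b) = δ)]
      have e1 : ∑ x ∈ S.filter (fun x => χ x = ε ∧ χ (x + b) = δ),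
          (1 + ε * χ x) * (1 + δ * χ (x + b))
          = 4 * ((S.filter (fun x => χ x = ε ∧ χ (x + b) = δ)).card : ℤ) := by
        have hc : ∀ x ∈ S.filter (fun x => χ x = ε ∧ χ (x + b) = δ),
            (1 + ε * χ x) * (1 + δ * χ (x + b)) = (4 : ℤ) := by
          intro x hx
          obtain ⟨-, h1, h2⟩ := mem_filter.mp hx
          rw [h1, h2]
          rcases hε with rfl | rfl <;> rcases hδ with rfl | rfl <;> norm_num
        rw [Finset.sum_congr rfl hc, Finset.sum_const, nsmul_eq_mul, mul_comm]
      have e2 : ∑ x ∈ S.filter (fun x => ¬(χ x = ε ∧ χ (x + b) = δ)),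
          (1 + ε * χ x) * (1 + δ * χ (x + b)) = 0 := by
        refine Finset.sum_eq_zero ?_
        intro x hx
        obtain ⟨hxS, hnot⟩ := mem_filter.mp hx
        obtain ⟨hx0, hxb⟩ := (hmemS x).mp hxS
        have d1 : χ x = 1 ∨ χ x = -1 := by
          rw [hχ]; exact quadraticChar_dichotomy hx0
        have d2 : χ (x + b) = 1 ∨ χ (x + b) = -1 := by
          rw [hχ]; exact quadraticChar_dichotomy hxb
        have he : ε * χ x = 1 ∨ ε * χ x = -1 := by
          rcases hε with rfl | rfl <;> rcases d1 with h | h <;> rw [h] <;> norm_num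
        have hf : δ * χ (x + b) = 1 ∨ δ * χ (x + b) = -1 := by
          rcases hδ with rfl | rfl <;> rcases d2 with h | h <;> rw [h] <;> norm_num
        have hne : ¬(ε * χ x = 1 ∧ δ * χ (x + b) = 1) := by
          rintro ⟨u, v⟩
          apply hnot
          constructor
          · rcases hε with rfl | rfl <;> rcases d1 with h | h <;> rw [h] at u ⊢ <;> omega
          · rcases hδ with rfl | rfl <;> rcases d2 with h | h <;> rw [h] at v ⊢ <;> omega
        rcases he with h | h
        · rcases hf with h' | h'
          · exact absurd (And.intro h h') hne
          · rw [h']; ring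
        · rw [h]; ring
      rw [e1, e2, add_zero]
    rw [expand, hA, hB, hT, hScard] at eval
    linarith [eval]
  -- translate Nat.card of subtypes into filtered card
  have card_eq : ∀ ε δ : ℤ,
      Nat.card {x : ZMod p // x ≠ 0 ∧ x + b ≠ 0 ∧
          legendreSym p (x.val : ℤ) = ε ∧ legendreSym p ((x + b).val : ℤ) = δ}
        = (S.filter (fun x => χ x = ε ∧ χ (x + b) = δ)).card := by
    intro ε δ
    rw [Nat.card_eq_fintype_card, Fintype.card_subtype]
    congr 1
    ext x
    simp only [mem_filter, mem_univ, true_and, hmemS, hleg]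
    tauto
  refine ⟨?_, ?_, ?_, ?_⟩
  · have h1 := key 1 1 (Or.inl rfl) (Or.inl rfl)
    have h2 := card_eq 1 1
    rw [h2]
    omega
  · have h1 := key 1 (-1) (Or.inl rfl) (Or.inr rfl)
    have h2 := card_eq 1 (-1)
    rw [h2]
    omega
  · have h1 := key (-1) 1 (Or.inr rfl) (Or.inl rfl)
    have h2 := card_eq (-1) 1
    rw [h2]
    omega
  · have h1 := key (-1) (-1) (Or.inr rfl) (Or.inr rfl)
    have h2 := card_eq (-1) (-1)
    rw [h2]
    omega
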